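/- The numerical value of the corrected constant satisfies 4.6 < Θ·(1−β) + α < 4.7, where Θ = Σ_{k≥1} p_k²/(2(p_k+1))·∏_{j<k}(p_j+2)/(2(p_j+1)), α = Σ_{k≥1} p_k²/(2(p_k+1)²)·∏_{j<k}(p_j+2)/(2(p_j+1)), β = Σ_{k≥1} p_k/(2(p_k+1)²)·∏_{j<k}(p_j+2)/(2(p_j+1)). -/

import Mathlib

/-- `P j` is the `(j+1)`-st prime (0-indexed), as a real number. -/
noncomputable def P (j : ℕ) : ℝ := (Nat.nth Nat.Prime j : ℝ)

/-- `Θ = Σ_{k≥1} p_k²/(2(p_k+1))·∏_{j<k}(p_j+2)/(2(p_j+1))` (0-indexed). -/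
noncomputable def Theta : ℝ :=
  ∑' k : ℕ, (P k) ^ 2 / (2 * (P k + 1)) * ∏ j ∈ Finset.range k, (P j + 2) / (2 * (P j + 1))

/-- `α = Σ_{k≥1} p_k²/(2(p_k+1)²)·∏_{j<k}(p_j+2)/(2(p_j+1))` (0-indexed). -/
noncomputable def alpha : ℝ :=
  ∑' k : ℕ, (P k) ^ 2 / (2 * (P k + 1) ^ 2) * ∏ j ∈ Finset.range k, (P j + 2) / (2 * (P j + 1))

/-- `β = Σ_{k≥1} p_k/(2(p_k+1)²)·∏_{j<k}(p_j+2)/(2(p_j+1))` (0-indexed). -/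
noncomputable def beta : ℝ :=
  ∑' k : ℕ, P k / (2 * (P k + 1) ^ 2) * ∏ j ∈ Finset.range k, (P j + 2) / (2 * (P j + 1))

/- Auxiliary definitions -/

noncomputable def rr (j : ℕ) : ℝ := (P j + 2) / (2 * (P j + 1))
noncomputable def QQ (k : ℕ) : ℝ := ∏ j ∈ Finset.range k, rr j
noncomputable def fT (k : ℕ) : ℝ := (P k) ^ 2 / (2 * (P k + 1)) * QQ k
noncomputable def fA (k : ℕ) : ℝ := (P k) ^ 2 / (2 * (P k + 1) ^ 2) * QQ k
noncomputable def fB (k : ℕ) : ℝ := P k / (2 * (P k + 1) ^ 2) * QQ k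
noncomputable def HH (m : ℕ) : ℝ := (m : ℝ) ^ 2 * ((m : ℝ) + 3) / (3 * 2 ^ m)

lemma two_le_P (j : ℕ) : (2 : ℝ) ≤ P j := by
  have := (Nat.prime_nth_prime j).two_le
  unfold P
  exact_mod_cast this

lemma add_two_le_P (j : ℕ) : (j : ℝ) + 2 ≤ P j := by
  have := Nat.add_two_le_nth_prime j
  unfold P
  exact_mod_cast this

lemma P_pos (j : ℕ) : (0 : ℝ) < P j := lt_of_lt_of_le two_pos (two_le_P j)

lemma rr_nonneg (j : ℕ) : 0 ≤ rr j := by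
  have := P_pos j
  unfold rr; positivity

lemma QQ_nonneg (k : ℕ) : 0 ≤ QQ k :=
  Finset.prod_nonneg fun j _ => rr_nonneg j

lemma rr_le (j : ℕ) : rr j ≤ ((j : ℝ) + 4) / (2 * ((j : ℝ) + 3)) := by
  have h1 := add_two_le_P j
  have h2 := P_pos j
  have hj : (0 : ℝ) ≤ (j : ℝ) := Nat.cast_nonneg j
  unfold rr
  rw [div_le_div_iff₀ (by positivity) (by positivity)]
  nlinarith

lemma QQ_le (k : ℕ) : QQ k ≤ ((k : ℝ) + 3) / (3 * 2 ^ k) := by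
  induction k with
  | zero => norm_num [QQ]
  | succ k ih =>
    have hr := rr_le k
    have hrn := rr_nonneg k
    have hQn := QQ_nonneg k
    have hk : (0 : ℝ) ≤ (k : ℝ) := Nat.cast_nonneg k
    have h2 : (0 : ℝ) < (2 : ℝ) ^ k := by positivity
    have hQ : QQ (k + 1) = QQ k * rr k := Finset.prod_range_succ rr k
    rw [hQ]
    push_cast
    calc QQ k * rr k ≤ (((k : ℝ) + 3) / (3 * 2 ^ k)) * (((k : ℝ) + 4) / (2 * ((k : ℝ) + 3))) := by
          apply mul_le_mul ih hr hrn (by positivity)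
      _ = ((k : ℝ) + 1 + 3) / (3 * 2 ^ (k + 1)) := by
          rw [div_mul_div_comm, div_eq_div_iff (by positivity) (by positivity)]
          ring
    
/- Chebyshev-type bound: the k-th prime is at most 2k² for k ≥ 7. -/

lemma two_sq_le_pow {k : ℕ} (hk : 7 ≤ k) : 2 * k ^ 2 ≤ 2 ^ k := by
  induction k with
  | zero => omega
  | succ k ih =>
    rcases Nat.lt_or_ge k 7 with h | h
    · interval_cases k <;> simp_all <;> norm_num
    · have := ih h
      have h1 : 2 * (k + 1) ^ 2 ≤ 2 * (2 * k ^ 2) := by nlinarith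
      calc 2 * (k + 1) ^ 2 ≤ 2 * (2 * k ^ 2) := h1
        _ ≤ 2 * 2 ^ k := by omega
        _ = 2 ^ (k + 1) := by rw [pow_succ]; ring

lemma centralBinom_le_pow_count (n : ℕ) (hn : 0 < n) :
    Nat.centralBinom n ≤ (2 * n) ^ (Nat.count Nat.Prime (2 * n + 1)) := by
  conv_lhs => rw [← Nat.prod_pow_factorization_centralBinom n]
  rw [Nat.count_eq_card_filter_range]
  have h1 : ∏ p ∈ Finset.range (2 * n + 1), p ^ (Nat.centralBinom n).factorization p
      = ∏ p ∈ (Finset.range (2 * n + 1)).filter Nat.Prime,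
          p ^ (Nat.centralBinom n).factorization p := by
    symm
    apply Finset.prod_filter_of_ne
    intro x _ hx
    by_contra hnp
    rw [Nat.factorization_eq_zero_of_not_prime _ hnp, pow_zero] at hx
    exact hx rfl
  rw [h1]
  calc ∏ p ∈ (Finset.range (2 * n + 1)).filter Nat.Prime,
          p ^ (Nat.centralBinom n).factorization p
      ≤ ∏ _p ∈ (Finset.range (2 * n + 1)).filter Nat.Prime, (2 * n) := by
        apply Finset.prod_le_prod' 
        intro i _
        exact Nat.pow_factorization_choose_le (by omega)
    _ = (2 * n) ^ ((Finset.range (2 * n + 1)).filter Nat.Prime).card :=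
        Finset.prod_const _

lemma nth_prime_le {k : ℕ} (hk : 7 ≤ k) : Nat.nth Nat.Prime k ≤ 2 * k ^ 2 := by
  have hcount : k < Nat.count Nat.Prime (2 * k ^ 2 + 1) := by
    by_contra hc
    push_neg at hc
    have h4 : 4 ≤ k ^ 2 := by nlinarith
    have hB := Nat.four_pow_lt_mul_centralBinom (k ^ 2) h4
    have hC := centralBinom_le_pow_count (k ^ 2) (by positivity)
    have hpow : 2 * k ^ 2 ≤ 2 ^ k := two_sq_le_pow hk
    have hk2 : k ^ 2 ≤ 2 ^ k := by omega
    have h5 : (2 * k ^ 2) ^ Nat.count Nat.Prime (2 * k ^ 2 + 1) ≤ (2 * k ^ 2) ^ k :=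
      Nat.pow_le_pow_right (by positivity) hc
    have h6 : (2 * k ^ 2) ^ k ≤ (2 ^ k) ^ k := Nat.pow_le_pow_left hpow k
    have h7 : 4 ^ (k ^ 2) < k ^ 2 * (2 ^ k) ^ k :=
      lt_of_lt_of_le hB (by
        calc k ^ 2 * Nat.centralBinom (k ^ 2)
            ≤ k ^ 2 * ((2 * k ^ 2) ^ Nat.count Nat.Prime (2 * k ^ 2 + 1)) :=
              Nat.mul_le_mul_left _ hC
          _ ≤ k ^ 2 * (2 * k ^ 2) ^ k := Nat.mul_le_mul_left _ h5
          _ ≤ k ^ 2 * (2 ^ k) ^ k := Nat.mul_le_mul_left _ h6)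
    have h8 : k ^ 2 * (2 ^ k) ^ k ≤ 2 ^ k * (2 ^ k) ^ k := Nat.mul_le_mul_right _ hk2
    have h9 : 2 ^ k * (2 ^ k) ^ k = 2 ^ (k + k * k) := by
      rw [← pow_mul, ← pow_add]
    have h10 : 4 ^ (k ^ 2) = 2 ^ (2 * k ^ 2) := by
      rw [show (4 : ℕ) = 2 ^ 2 by norm_num, ← pow_mul]
    have h11 : k + k * k ≤ 2 * k ^ 2 := by nlinarith
    have h12 : (2 : ℕ) ^ (k + k * k) ≤ 2 ^ (2 * k ^ 2) := Nat.pow_le_pow_right (by norm_num) h11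
    omega
  have h := (Nat.lt_nth_iff_count_lt Nat.infinite_setOf_prime).mp hcount
  have h' : Nat.nth Nat.Prime k < 2 * k ^ 2 + 1 := h
  omega

lemma P_le {k : ℕ} (hk : 7 ≤ k) : P k ≤ 2 * (k : ℝ) ^ 2 := by
  have := nth_prime_le hk
  unfold P
  exact_mod_cast this

/- Tail estimates -/

lemma fT_nonneg (k : ℕ) : 0 ≤ fT k := by
  have h1 := P_pos k
  have h2 := QQ_nonneg k
  unfold fT
  positivity

lemma fA_nonneg (k : ℕ) : 0 ≤ fA k := by
  have h1 := P_pos k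
  have h2 := QQ_nonneg k
  unfold fA
  positivity

lemma fB_nonneg (k : ℕ) : 0 ≤ fB k := by
  have h1 := P_pos k
  have h2 := QQ_nonneg k
  unfold fB
  positivity

lemma fA_le_fT (k : ℕ) : fA k ≤ fT k := by
  have h1 := P_pos k
  have h2 := QQ_nonneg k
  have h3 := two_le_P k
  unfold fA fT
  apply mul_le_mul_of_nonneg_right _ h2
  apply div_le_div_of_nonneg_left (by positivity) (by positivity)
  nlinarith

lemma fB_le_fT (k : ℕ) : fB k ≤ fT k := by
  have h1 := P_pos k
  have h2 := QQ_nonneg k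
  have h3 := two_le_P k
  unfold fB fT
  apply mul_le_mul_of_nonneg_right _ h2
  rw [div_le_div_iff₀ (by positivity) (by positivity)]
  nlinarith

lemma fT_le_HH {k : ℕ} (hk : 7 ≤ k) : fT k ≤ HH k := by
  have h1 := P_pos k
  have h2 := QQ_nonneg k
  have h3 := P_le hk
  have h4 := QQ_le k
  have hk7 : (7 : ℝ) ≤ (k : ℝ) := by exact_mod_cast hk
  have h5 : (P k) ^ 2 / (2 * (P k + 1)) ≤ (k : ℝ) ^ 2 := by
    rw [div_le_iff₀ (by positivity)]
    nlinarith
  unfold fT HH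
  calc (P k) ^ 2 / (2 * (P k + 1)) * QQ k ≤ (k : ℝ) ^ 2 * (((k : ℝ) + 3) / (3 * 2 ^ k)) := by
        apply mul_le_mul h5 h4 h2 (by positivity)
    _ = (k : ℝ) ^ 2 * ((k : ℝ) + 3) / (3 * 2 ^ k) := by ring

lemma HH_succ_le {m : ℕ} (hm : 25 ≤ m) : HH (m + 1) ≤ 3 / 4 * HH m := by
  have hm' : (25 : ℝ) ≤ (m : ℝ) := by exact_mod_cast hm
  have h2 : (0 : ℝ) < (2 : ℝ) ^ m := by positivity
  have key : 2 * (((m : ℝ) + 1) ^ 2 * (((m : ℝ) + 1) + 3)) ≤ 3 * ((m : ℝ) ^ 2 * ((m : ℝ) + 3)) := by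
    nlinarith
  have e1 : HH (m + 1) = ((m : ℝ) + 1) ^ 2 * (((m : ℝ) + 1) + 3) / (3 * (2 ^ m * 2)) := by
    unfold HH
    push_cast
    ring
  have e2 : 3 / 4 * HH m = (3 * ((m : ℝ) ^ 2 * ((m : ℝ) + 3))) / (4 * (3 * 2 ^ m)) := by
    unfold HH
    ring
  rw [e1, e2, div_le_div_iff₀ (by positivity) (by positivity)]
  nlinarith [mul_le_mul_of_nonneg_right key h2.le]

lemma HH_tail (k : ℕ) : HH (k + 25) ≤ 17500 / 100663296 * (3 / 4 : ℝ) ^ k := by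
  induction k with
  | zero => unfold HH; norm_num
  | succ k ih =>
    have h1 : HH (k + 1 + 25) ≤ 3 / 4 * HH (k + 25) := by
      have : k + 1 + 25 = (k + 25) + 1 := by ring
      rw [this]
      exact HH_succ_le (by omega)
    calc HH (k + 1 + 25) ≤ 3 / 4 * HH (k + 25) := h1
      _ ≤ 3 / 4 * (17500 / 100663296 * (3 / 4 : ℝ) ^ k) := by
          apply mul_le_mul_of_nonneg_left ih (by norm_num)
      _ = 17500 / 100663296 * (3 / 4 : ℝ) ^ (k + 1) := by ring

lemma fT_tail (k : ℕ) : fT (k + 25) ≤ 17500 / 100663296 * (3 / 4 : ℝ) ^ k :=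
  (fT_le_HH (by omega)).trans (HH_tail k)

lemma geom_summable : Summable (fun k : ℕ => 17500 / 100663296 * (3 / 4 : ℝ) ^ k) :=
  (summable_geometric_of_lt_one (by norm_num) (by norm_num)).mul_left _

lemma geom_tsum : ∑' k : ℕ, 17500 / 100663296 * (3 / 4 : ℝ) ^ k = 17500 / 100663296 * 4 := by
  rw [tsum_mul_left, tsum_geometric_of_lt_one (by norm_num) (by norm_num)]
  norm_num

lemma summable_fT : Summable fT := by
  rw [← summable_nat_add_iff 25]
  exact Summable.of_nonneg_of_le (fun k => fT_nonneg _) fT_tail geom_summable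

lemma summable_fA : Summable fA :=
  Summable.of_nonneg_of_le fA_nonneg fA_le_fT summable_fT

lemma summable_fB : Summable fB :=
  Summable.of_nonneg_of_le fB_nonneg fB_le_fT summable_fT

/- Generic bounds from partial sums plus tail -/

lemma tail_bound_fT : ∑' k : ℕ, fT (k + 25) ≤ 17500 / 100663296 * 4 := by
  rw [← geom_tsum]
  exact Summable.tsum_le_tsum fT_tail ((summable_nat_add_iff 25).mpr summable_fT) geom_summable

lemma tail_bound_fA : ∑' k : ℕ, fA (k + 25) ≤ 17500 / 100663296 * 4 := by
  rw [← geom_tsum]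
  exact Summable.tsum_le_tsum (fun k => (fA_le_fT _).trans (fT_tail k))
    ((summable_nat_add_iff 25).mpr summable_fA) geom_summable

lemma tail_bound_fB : ∑' k : ℕ, fB (k + 25) ≤ 17500 / 100663296 * 4 := by
  rw [← geom_tsum]
  exact Summable.tsum_le_tsum (fun k => (fB_le_fT _).trans (fT_tail k))
    ((summable_nat_add_iff 25).mpr summable_fB) geom_summable

lemma Theta_eq : Theta = ∑' k, fT k := rfl
lemma alpha_eq : alpha = ∑' k, fA k := rfl
lemma beta_eq : beta = ∑' k, fB k := rfl

lemma Theta_bounds :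
    ∑ k ∈ Finset.range 25, fT k ≤ Theta ∧
      Theta ≤ ∑ k ∈ Finset.range 25, fT k + 17500 / 100663296 * 4 := by
  rw [Theta_eq]
  constructor
  · exact Summable.sum_le_tsum _ (fun i _ => fT_nonneg i) summable_fT
  · rw [← Summable.sum_add_tsum_nat_add 25 summable_fT]
    have := tail_bound_fT
    linarith

lemma alpha_bounds :
    ∑ k ∈ Finset.range 25, fA k ≤ alpha ∧
      alpha ≤ ∑ k ∈ Finset.range 25, fA k + 17500 / 100663296 * 4 := by
  rw [alpha_eq]
  constructor
  · exact Summable.sum_le_tsum _ (fun i _ => fA_nonneg i) summable_fA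
  · rw [← Summable.sum_add_tsum_nat_add 25 summable_fA]
    have := tail_bound_fA
    linarith

lemma beta_bounds :
    ∑ k ∈ Finset.range 25, fB k ≤ beta ∧
      beta ≤ ∑ k ∈ Finset.range 25, fB k + 17500 / 100663296 * 4 := by
  rw [beta_eq]
  constructor
  · exact Summable.sum_le_tsum _ (fun i _ => fB_nonneg i) summable_fB
  · rw [← Summable.sum_add_tsum_nat_add 25 summable_fB]
    have := tail_bound_fB
    linarith


lemma P_val (k p : ℕ) (hp : Nat.Prime p) (hc : Nat.count Nat.Prime p = k) : P k = p := by
  unfold P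
  rw [← hc, Nat.nth_count hp]

lemma P0 : P 0 = 2 := P_val 0 2 (by norm_num) (by decide)
lemma P1 : P 1 = 3 := P_val 1 3 (by norm_num) (by decide)
lemma P2 : P 2 = 5 := P_val 2 5 (by norm_num) (by decide)
lemma P3 : P 3 = 7 := P_val 3 7 (by norm_num) (by decide)
lemma P4 : P 4 = 11 := P_val 4 11 (by norm_num) (by decide)
lemma P5 : P 5 = 13 := P_val 5 13 (by norm_num) (by decide)
lemma P6 : P 6 = 17 := P_val 6 17 (by norm_num) (by decide)
lemma P7 : P 7 = 19 := P_val 7 19 (by norm_num) (by decide)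
lemma P8 : P 8 = 23 := P_val 8 23 (by norm_num) (by decide)
lemma P9 : P 9 = 29 := P_val 9 29 (by norm_num) (by decide)
lemma P10 : P 10 = 31 := P_val 10 31 (by norm_num) (by decide)
lemma P11 : P 11 = 37 := P_val 11 37 (by norm_num) (by decide)
lemma P12 : P 12 = 41 := P_val 12 41 (by norm_num) (by decide)
lemma P13 : P 13 = 43 := P_val 13 43 (by norm_num) (by decide)
lemma P14 : P 14 = 47 := P_val 14 47 (by norm_num) (by decide)
lemma P15 : P 15 = 53 := P_val 15 53 (by norm_num) (by decide)
lemma P16 : P 16 = 59 := P_val 16 59 (by norm_num) (by decide)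
lemma P17 : P 17 = 61 := P_val 17 61 (by norm_num) (by decide)
lemma P18 : P 18 = 67 := P_val 18 67 (by norm_num) (by decide)
lemma P19 : P 19 = 71 := P_val 19 71 (by norm_num) (by decide)
lemma P20 : P 20 = 73 := P_val 20 73 (by norm_num) (by decide)
lemma P21 : P 21 = 79 := P_val 21 79 (by norm_num) (by decide)
lemma P22 : P 22 = 83 := P_val 22 83 (by norm_num) (by decide)
lemma P23 : P 23 = 89 := P_val 23 89 (by norm_num) (by decide)
set_option maxRecDepth 10000 in
lemma P24 : P 24 = 97 := P_val 24 97 (by norm_num) (by decide)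

lemma ST_eq : ∑ k ∈ Finset.range 25, fT k = (24292140079653298348405379 : ℝ) / 4877023985183626094444544 := by
  simp only [fT, QQ, rr, Finset.sum_range_succ, Finset.sum_range_zero,
    Finset.prod_range_succ, Finset.prod_range_zero, P0, P1, P2, P3, P4, P5, P6, P7, P8, P9, P10, P11, P12, P13, P14, P15, P16, P17, P18, P19, P20, P21, P22, P23, P24]
  norm_num

lemma SA_eq : ∑ k ∈ Finset.range 25, fA k = (10252703155560444759626835872308501 : ℝ) / 13236944441099574536856630108094464 := by
  simp only [fA, QQ, rr, Finset.sum_range_succ, Finset.sum_range_zero,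
    Finset.prod_range_succ, Finset.prod_range_zero, P0, P1, P2, P3, P4, P5, P6, P7, P8, P9, P10, P11, P12, P13, P14, P15, P16, P17, P18, P19, P20, P21, P22, P23, P24]
  norm_num

lemma SB_eq : ∑ k ∈ Finset.range 25, fB k = (2984239733406615042316246966202213 : ℝ) / 13236944441099574536856630108094464 := by
  simp only [fB, QQ, rr, Finset.sum_range_succ, Finset.sum_range_zero,
    Finset.prod_range_succ, Finset.prod_range_zero, P0, P1, P2, P3, P4, P5, P6, P7, P8, P9, P10, P11, P12, P13, P14, P15, P16, P17, P18, P19, P20, P21, P22, P23, P24]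
  norm_num

/-- The corrected constant satisfies `4.6 < Θ·(1−β)+α < 4.7`. -/
theorem corrected_constant_bounds :
    4.6 < Theta * (1 - beta) + alpha ∧ Theta * (1 - beta) + alpha < 4.7 := by
  obtain ⟨hT1, hT2⟩ := Theta_bounds
  obtain ⟨hA1, hA2⟩ := alpha_bounds
  obtain ⟨hB1, hB2⟩ := beta_bounds
  rw [ST_eq] at hT1 hT2
  rw [SA_eq] at hA1 hA2
  rw [SB_eq] at hB1 hB2
  have hb1 : (1 : ℝ) - beta ≥ 0 := by norm_num at hB2 ⊢; linarith
  have hT0 : (0 : ℝ) ≤ Theta := by norm_num at hT1 ⊢; linarith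
  constructor
  · nlinarith [mul_le_mul hT1 (by linarith : 1 - beta ≥ (1 : ℝ) - (2984239733406615042316246966202213 / 13236944441099574536856630108094464 + 17500 / 100663296 * 4)) (by norm_num) hT0]
  · nlinarith [mul_le_mul hT2 (by linarith : (1 : ℝ) - 2984239733406615042316246966202213 / 13236944441099574536856630108094464 ≥ 1 - beta) hb1 (by norm_num)]
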